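/- (im φ = ker ∂.) For every linear map κ : V → End(V) with κ(v) ∈ 𝔤 for all v ∈ V and κ(v)v' = κ(v')v for all v, v' ∈ V (i.e. ∂κ = 0), there exists an alternating bilinear map T : V × V → V such that φ_T(v, v') = κ(v)v' for all v, v' ∈ V. -/

import Mathlib

/-- Membership in the Lie algebra `𝔤`. -/
def InG {V : Type*} [AddCommGroup V] [Module ℝ V]
    (η : V →ₗ[ℝ] V →ₗ[ℝ] ℝ)
    (h : Module.Dual ℝ V →ₗ[ℝ] Module.Dual ℝ V →ₗ[ℝ] ℝ)
    (X : V →ₗ[ℝ] V) : Prop :=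
  (∀ v v' : V, η (X v) v' + η v (X v') = 0) ∧
  (∀ α α' : Module.Dual ℝ V, h (α ∘ₗ X) α' + h α (α' ∘ₗ X) = 0)

open Module FiniteDimensional in
set_option maxHeartbeats 2000000 in
/-- `im φ = ker ∂`: every `𝔤`-valued `κ` with `∂κ = 0` is of the form
`φ_T` for some alternating bilinear `T : V × V → V`, i.e. `α(κ(v)v') =
η(T(v, h♯α), v') + η(T(v', h♯α), v)` for all `α, v, v'`. -/
theorem ker_spencer_in_image_of_phi
    {V : Type*} [AddCommGroup V] [Module ℝ V] [FiniteDimensional ℝ V]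
    (W : Submodule ℝ V)
    (η : V →ₗ[ℝ] V →ₗ[ℝ] ℝ)
    (hη_symm : ∀ v v' : V, η v v' = η v' v)
    (hη_rad : ∀ v : V, (∀ v' : V, η v v' = 0) ↔ v ∈ W)
    (h : Module.Dual ℝ V →ₗ[ℝ] Module.Dual ℝ V →ₗ[ℝ] ℝ)
    (hh_symm : ∀ α α' : Module.Dual ℝ V, h α α' = h α' α)
    (hh_rad : ∀ α : Module.Dual ℝ V,
      (∀ α' : Module.Dual ℝ V, h α α' = 0) ↔ α ∈ W.dualAnnihilator)
    (hs : Module.Dual ℝ V →ₗ[ℝ] V)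
    (hhs : ∀ α β : Module.Dual ℝ V, β (hs α) = h β α)
    (κ : V →ₗ[ℝ] V →ₗ[ℝ] V)
    (hκg : ∀ v : V, InG η h (κ v))
    (hκsym : ∀ v v' : V, κ v v' = κ v' v) :
    ∃ T : V →ₗ[ℝ] V →ₗ[ℝ] V, (∀ v : V, T v v = 0) ∧
      ∀ v v' : V, ∀ α : Module.Dual ℝ V,
        α (κ v v') = η (T v (hs α)) v' + η (T v' (hs α)) v := by
  classical
  -- hs maps into W
  have hrange : ∀ α, hs α ∈ W := by
    intro α
    have hmem : hs α ∈ W.dualAnnihilator.dualCoannihilator := by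
      rw [Submodule.mem_dualCoannihilator]
      intro φ hφ
      rw [hhs]
      exact (hh_rad φ).mpr hφ α
    rwa [Subspace.dualAnnihilator_dualCoannihilator_eq] at hmem
  -- kernel of hs
  have hker : ∀ α, hs α = 0 ↔ α ∈ W.dualAnnihilator := by
    intro α
    rw [← hh_rad]
    constructor
    · intro h0 α'
      rw [hh_symm, ← hhs, h0, map_zero]
    · intro h0
      rw [← Module.forall_dual_apply_eq_zero_iff ℝ (hs α)]
      intro φ
      rw [hhs, hh_symm]
      exact h0 φ
  have hkerEq : LinearMap.ker hs = W.dualAnnihilator := by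
    ext α; simp [LinearMap.mem_ker, hker α]
  -- κ maps into W
  have hκW : ∀ v v', κ v v' ∈ W := by
    intro v v'
    rw [← hη_rad]
    intro v''
    have a1 := (hκg v').1 v v''
    have a2 := (hκg v'').1 v v'
    have a3 := (hκg v).1 v'' v'
    rw [hκsym v' v, hκsym v' v''] at a1
    rw [hκsym v'' v] at a2
    rw [hη_symm v'' (κ v v')] at a3
    linarith
  -- range of hs is exactly W; get a section σ
  have hW : LinearMap.range hs = W := by
    have hle : LinearMap.range hs ≤ W := by rintro _ ⟨α, rfl⟩; exact hrange α
    refine Submodule.eq_of_le_of_finrank_eq hle ?_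
    have h1 := LinearMap.finrank_range_add_finrank_ker hs
    have h2 : finrank ℝ (V ⧸ W) = finrank ℝ W.dualAnnihilator :=
      (Subspace.quotEquivAnnihilator W).finrank_eq
    have h3 := Submodule.finrank_quotient_add_finrank W
    have h4 : finrank ℝ (Module.Dual ℝ V) = finrank ℝ V := Subspace.dual_finrank_eq
    rw [hkerEq] at h1
    omega
  set hs' : Module.Dual ℝ V →ₗ[ℝ] W := hs.codRestrict W hrange with hhs'
  have hs'surj : Function.Surjective hs' := by
    intro m
    have hm : (m : V) ∈ LinearMap.range hs := hW ▸ m.2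
    obtain ⟨α, hα⟩ := hm
    exact ⟨α, Subtype.ext (by simpa [hhs'] using hα)⟩
  obtain ⟨σ, hσ⟩ := hs'.exists_rightInverse_of_surjective (LinearMap.range_eq_top.2 hs'surj)
  have hσap : ∀ m : W, hs (σ m) = (m : V) := by
    intro m
    have := LinearMap.ext_iff.1 hσ m
    simpa [hhs', Subtype.ext_iff] using congrArg (Subtype.val) this
  -- antisymmetry identity
  have hAnti : ∀ (x : V) (m n : W), σ n (κ x (m : V)) + σ m (κ x (n : V)) = 0 := by
    intro x m n
    have key := (hκg x).2 (σ n) (σ m)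
    rw [← hhs (σ m) (σ n ∘ₗ κ x)] at key
    rw [hh_symm (σ n) (σ m ∘ₗ κ x), ← hhs (σ n) (σ m ∘ₗ κ x)] at key
    simpa [hσap] using key
  -- κ vanishes on W × W
  have hK2 : ∀ m n : W, κ (m : V) (n : V) = 0 := by
    intro m n
    have key : ∀ p : W, σ p (κ (m : V) (n : V)) = 0 := by
      intro p
      have b1 := hAnti (n : V) m p
      have b2 := hAnti (p : V) n m
      have b3 := hAnti (m : V) p n
      rw [hκsym (n : V) (m : V), hκsym (n : V) (p : V)] at b1
      rw [hκsym (m : V) (p : V)] at b3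
      linarith
    rw [← Module.forall_dual_apply_eq_zero_iff ℝ (κ (m : V) (n : V))]
    intro φ
    have hx : κ (m : V) (n : V) ∈ W := hκW _ _
    have hann : φ - σ (hs' φ) ∈ W.dualAnnihilator := by
      rw [← hkerEq, LinearMap.mem_ker, map_sub, hσap]
      simp [hhs']
    rw [Submodule.mem_dualAnnihilator] at hann
    have h0 := hann _ hx
    rw [LinearMap.sub_apply] at h0
    have := key (hs' φ)
    linarith
  -- complement of W
  obtain ⟨U, hU⟩ := W.exists_isCompl
  set PW := W.linearProjOfIsCompl U hU with hPW
  set PU := U.linearProjOfIsCompl W hU.symm with hPU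
  have hPsum : ∀ v : V, ((PW v : V) + (PU v : V)) = v := fun v =>
    Submodule.projection_add_projection_eq_self hU v
  -- restriction of η to U, as a map to the dual of U
  set g : U →ₗ[ℝ] Module.Dual ℝ U := η.compl₁₂ U.subtype U.subtype with hg
  have hgap : ∀ x y : U, g x y = η (x : V) (y : V) := fun x y => rfl
  have hginj : Function.Injective g := by
    rw [← LinearMap.ker_eq_bot]
    rw [Submodule.eq_bot_iff]
    intro x hx
    rw [LinearMap.mem_ker] at hx
    have hxW : (x : V) ∈ W := by
      rw [← hη_rad]
      intro v'
      have : η (x : V) v' = η (x : V) ((PW v' : V)) + η (x : V) ((PU v' : V)) := by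
        conv_lhs => rw [← hPsum v']
        simp
      rw [this]
      have e1 : η (x : V) ((PW v' : V)) = 0 := by
        rw [hη_symm]; exact (hη_rad _).mpr (PW v').2 _
      have e2 : η (x : V) ((PU v' : V)) = 0 := by
        rw [← hgap x (PU v'), hx]; rfl
      rw [e1, e2, add_zero]
    have : (x : V) = 0 := by
      have := hU.disjoint
      rw [Submodule.disjoint_def] at this
      exact this _ hxW x.2
    exact Subtype.ext this
  have hgdim : finrank ℝ U = finrank ℝ (Module.Dual ℝ U) := Subspace.dual_finrank_eq.symm
  set G := g.linearEquivOfInjective hginj hgdim with hG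
  have hGap : ∀ f : Module.Dual ℝ U, g (G.symm f) = f := by
    intro f
    have : g (G.symm f) = G (G.symm f) := rfl
    rw [this, G.apply_symm_apply]
  -- the building block of T
  set F : V → W → Module.Dual ℝ U := fun v m => ((σ m) ∘ₗ (κ v)) ∘ₗ U.subtype with hF
  set D : V → W → V := fun v m => ((G.symm (F v m)) : V) with hD
  have hF1 : ∀ v₁ v₂ m, F (v₁ + v₂) m = F v₁ m + F v₂ m := by
    intro v₁ v₂ m; ext u; simp [hF, map_add]
  have hF2 : ∀ (c : ℝ) v m, F (c • v) m = c • F v m := by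
    intro c v m; ext u; simp [hF, map_smul]
  have hF3 : ∀ v m₁ m₂, F v (m₁ + m₂) = F v m₁ + F v m₂ := by
    intro v m₁ m₂; ext u; simp [hF, map_add]
  have hF4 : ∀ v (c : ℝ) m, F v (c • m) = c • F v m := by
    intro v c m; ext u; simp [hF, map_smul]
  have hD1 : ∀ v₁ v₂ m, D (v₁ + v₂) m = D v₁ m + D v₂ m := by
    intro v₁ v₂ m; simp [hD, hF1, map_add]
  have hD2 : ∀ (c : ℝ) v m, D (c • v) m = c • D v m := by
    intro c v m; simp [hD, hF2, map_smul]
  have hD3 : ∀ v m₁ m₂, D v (m₁ + m₂) = D v m₁ + D v m₂ := by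
    intro v m₁ m₂; simp [hD, hF3, map_add]
  have hD4 : ∀ v (c : ℝ) m, D v (c • m) = c • D v m := by
    intro v c m; simp [hD, hF4, map_smul]
  -- key evaluation
  have hDeval : ∀ (v : V) (m : W) (v' : V), η (D v m) v' = σ m (κ v ((PU v' : V))) := by
    intro v m v'
    have e0 : η (D v m) v' = η (D v m) ((PW v' : V)) + η (D v m) ((PU v' : V)) := by
      conv_lhs => rw [← hPsum v']
      simp
    have e1 : η (D v m) ((PW v' : V)) = 0 := by
      rw [hη_symm]; exact (hη_rad _).mpr (PW v').2 _
    have e2 : η (D v m) ((PU v' : V)) = σ m (κ v ((PU v' : V))) := by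
      have : η (D v m) ((PU v' : V)) = g (G.symm (F v m)) (PU v') := rfl
      rw [this, hGap]
      simp [hF]
    rw [e0, e1, e2, zero_add]
  -- define T
  set T : V →ₗ[ℝ] V →ₗ[ℝ] V := LinearMap.mk₂ ℝ
      (fun v v' => (2⁻¹ : ℝ) • (D v (PW v') - D v' (PW v)))
      (by
        intro v₁ v₂ v'
        rw [map_add, hD1, hD3]
        module)
      (by
        intro c v v'
        rw [map_smul, hD2, hD4]
        module)
      (by
        intro v v₁ v₂
        rw [map_add, hD3, hD1]
        module)
      (by
        intro v c v'
        rw [map_smul, hD4, hD2]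
        module) with hT
  have hTap : ∀ v v' : V, T v v' = (2⁻¹ : ℝ) • (D v (PW v') - D v' (PW v)) := by
    intro v v'
    simp only [hT, LinearMap.mk₂_apply]
  refine ⟨T, ?_, ?_⟩
  · intro v; rw [hTap]; simp
  · intro v v' α
    set m : W := ⟨hs α, hrange α⟩ with hm
    have hPWm : PW (hs α) = m := Submodule.linearProjOfIsCompl_apply_left hU m
    -- α agrees with σ m on W
    have hα : α (κ v v') = σ m (κ v v') := by
      have hmem : κ v v' ∈ W := hκW v v'
      have hann : α - σ m ∈ W.dualAnnihilator := by
        rw [← hkerEq, LinearMap.mem_ker, map_sub, hσap]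
        simp [hm]
      rw [Submodule.mem_dualAnnihilator] at hann
      have h0 := hann _ hmem
      rw [LinearMap.sub_apply] at h0
      linarith
    -- evaluate the two η-terms
    have hE : ∀ a b : V, η (T a (hs α)) b
        = (2⁻¹ : ℝ) * (σ m (κ a ((PU b : V))) + σ m (κ ((PU b : V)) ((PW a : V)))) := by
      intro a b
      rw [hTap, hPWm]
      rw [map_smul, map_sub]
      rw [LinearMap.smul_apply, LinearMap.sub_apply]
      rw [hDeval a m b, hDeval (hs α) (PW a) b]
      have hanti : σ (PW a) (κ (hs α) ((PU b : V))) = - σ m (κ ((PU b : V)) ((PW a : V))) := by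
        have hx : κ (hs α) ((PU b : V)) = κ ((PU b : V)) ((m : V)) := by
          rw [hκsym]
        rw [hx]
        have := hAnti ((PU b : V)) m (PW a)
        linarith
      rw [hanti]
      ring_nf
    rw [hE v v', hE v' v, hα]
    -- expand everything in components
    have s3 : σ m (κ v v') = σ m (κ ((PW v : V)) ((PW v' : V))) + σ m (κ ((PW v : V)) ((PU v' : V)))
        + σ m (κ ((PU v : V)) ((PW v' : V))) + σ m (κ ((PU v : V)) ((PU v' : V))) := by
      conv_lhs => rw [← hPsum v, ← hPsum v']
      simp [map_add]
      ring
    have s1 : σ m (κ v ((PU v' : V))) = σ m (κ ((PW v : V)) ((PU v' : V)))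
        + σ m (κ ((PU v : V)) ((PU v' : V))) := by
      conv_lhs => rw [← hPsum v]
      simp [map_add]
    have s2 : σ m (κ v' ((PU v : V))) = σ m (κ ((PW v' : V)) ((PU v : V)))
        + σ m (κ ((PU v' : V)) ((PU v : V))) := by
      conv_lhs => rw [← hPsum v']
      simp [map_add]
    have s4 : κ ((PW v : V)) ((PW v' : V)) = 0 := hK2 (PW v) (PW v')
    have c1 : σ m (κ ((PU v' : V)) ((PW v : V))) = σ m (κ ((PW v : V)) ((PU v' : V))) := by
      rw [hκsym]
    have c2 : σ m (κ ((PU v : V)) ((PW v' : V))) = σ m (κ ((PW v' : V)) ((PU v : V))) := by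
      rw [hκsym]
    have c3 : σ m (κ ((PU v' : V)) ((PU v : V))) = σ m (κ ((PU v : V)) ((PU v' : V))) := by
      rw [hκsym]
    rw [s3, s4, s1, s2, c1, c2, c3]
    simp only [map_zero]
    ring
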